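/- Let N ≥ 2 be an integer and β a real number with β > N, and define ψ(r) = (1 + (r-1)β)^{1/N} for real r ≥ 1. Then there exists a unique real number r̄ > 1 satisfying ψ(r̄) = r̄, and moreover ψ'(r̄) < 1. -/

import Mathlib

open Real Set Filter Topology

lemma aux_rpow_eq (N : ℕ) (hN : N ≠ 0) (x r : ℝ) (hx : 0 ≤ x) (hr : 0 < r) :
    x ^ ((1:ℝ)/N) = r ↔ x = r ^ N := by
  rw [one_div]
  constructor
  · intro h; rw [← h, Real.rpow_inv_natCast_pow hx hN]
  · intro h; rw [h, Real.pow_rpow_inv_natCast hr.le hN]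

theorem stmt_4 (N : ℕ) (hN : 2 ≤ N) (β : ℝ) (hβ : (N : ℝ) < β)
    (ψ : ℝ → ℝ) (hψ : ∀ r : ℝ, ψ r = (1 + (r - 1) * β) ^ ((1 : ℝ) / N)) :
    (∃! rbar : ℝ, 1 < rbar ∧ ψ rbar = rbar) ∧
    (∀ rbar : ℝ, 1 < rbar → ψ rbar = rbar → deriv ψ rbar < 1) := by
  have hN0 : N ≠ 0 := by omega
  have hN2 : (2:ℝ) ≤ (N:ℝ) := by exact_mod_cast hN
  have hβ0 : (0:ℝ) < β := by linarith
  set h : ℝ → ℝ := fun r => r ^ N - (1 + (r - 1) * β) with hh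
  have hfix : ∀ r : ℝ, 1 < r → (ψ r = r ↔ h r = 0) := by
    intro r hr
    have hx : (0:ℝ) ≤ 1 + (r - 1) * β := by nlinarith
    rw [hψ r, aux_rpow_eq N hN0 _ r hx (by linarith)]
    simp only [hh, sub_eq_zero]
    exact ⟨fun e => e.symm, fun e => e.symm⟩
  have hcont : Continuous h := by
    simp only [hh]; fun_prop
  have h1 : h 1 = 0 := by simp [hh]
  -- existence of a root > 1
  have hd : HasDerivAt h ((N:ℝ) - β) 1 := by
    have hd1 : HasDerivAt (fun r : ℝ => r ^ N) ((N:ℝ) * 1 ^ (N - 1)) 1 := hasDerivAt_pow N 1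
    have hd2 : HasDerivAt (fun r : ℝ => 1 + (r - 1) * β) β 1 := by
      simpa using ((((hasDerivAt_id (1:ℝ)).sub_const 1).mul_const β).const_add 1)
    have := hd1.sub hd2; simp only [one_pow, mul_one] at this; exact this
  have hslope := hasDerivAt_iff_tendsto_slope.mp hd
  have hneg : ∀ᶠ r in 𝓝[≠] (1:ℝ), slope h 1 r < 0 :=
    hslope.eventually (Iio_mem_nhds (by linarith : (N:ℝ) - β < 0))
  have hneg' : ∀ᶠ r in 𝓝[>] (1:ℝ), slope h 1 r < 0 :=
    hneg.filter_mono (nhdsWithin_mono 1 (fun x hx => ne_of_gt hx))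
  have hmem : Set.Ioo (1:ℝ) (β + 1) ∈ 𝓝[>] (1:ℝ) :=
    Ioo_mem_nhdsGT_of_mem ⟨le_refl 1, by linarith⟩
  obtain ⟨r₀, hr₀s, hr₀m⟩ := (hneg'.and (eventually_of_mem hmem (fun x hx => hx))).exists
  obtain ⟨hr₀1, hr₀β⟩ := hr₀m
  have hr₀neg : h r₀ < 0 := by
    have hs : slope h 1 r₀ = (h r₀ - h 1) / (r₀ - 1) := slope_def_field h 1 r₀
    rw [hs, h1, sub_zero] at hr₀s
    have h10 : (0:ℝ) < r₀ - 1 := by linarith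
    by_contra hge
    push_neg at hge
    exact absurd (div_nonneg hge h10.le) (not_le.mpr hr₀s)
  have hβ1pos : 0 < h (β + 1) := by
    have hb1 : (1:ℝ) ≤ β + 1 := by linarith
    have hpow : (β + 1) ^ 2 ≤ (β + 1) ^ N := pow_le_pow_right₀ hb1 hN
    simp only [hh]
    nlinarith
  obtain ⟨c, hcmem, hc0⟩ := intermediate_value_Ioo (by linarith : r₀ ≤ β + 1)
    hcont.continuousOn (by exact ⟨hr₀neg, hβ1pos⟩ : (0:ℝ) ∈ Set.Ioo (h r₀) (h (β + 1)))
  have hc1 : 1 < c := lt_trans hr₀1 hcmem.1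
  -- uniqueness of roots > 1
  have huniq : ∀ a b : ℝ, 1 < a → 1 < b → h a = 0 → h b = 0 → a = b := by
    intro a b ha hb ha0 hb0
    by_contra hne
    wlog hab : a < b generalizing a b
    · exact this b a hb ha hb0 ha0 (Ne.symm hne) (lt_of_le_of_ne (not_lt.mp hab) (Ne.symm hne))
    have hcx := strictConvexOn_pow hN
    have hb1 : (0:ℝ) < b - 1 := by linarith
    set lam := (b - a)/(b - 1) with hlamdef
    set mu := (a - 1)/(b - 1) with hmudef
    have hlam : 0 < lam := div_pos (by linarith) hb1
    have hmu : 0 < mu := div_pos (by linarith) hb1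
    have hsum : lam + mu = 1 := by rw [hlamdef, hmudef, ← add_div, div_eq_one_iff_eq hb1.ne']; ring
    have hcomb : lam * 1 + mu * b = a := by rw [hlamdef, hmudef, div_mul_eq_mul_div, div_mul_eq_mul_div, ← add_div, div_eq_iff hb1.ne']; ring
    have hlt := hcx.2 (mem_Ici.mpr (by norm_num : (0:ℝ) ≤ 1))
      (mem_Ici.mpr (by linarith : (0:ℝ) ≤ b)) (by linarith : (1:ℝ) ≠ b) hlam hmu hsum
    simp only [smul_eq_mul] at hlt
    rw [hcomb] at hlt
    simp only [one_pow, mul_one] at hlt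
    have e1 : a ^ N = 1 + (a - 1) * β := by
      have := ha0; simp only [hh, sub_eq_zero] at this; exact this
    have e2 : b ^ N = 1 + (b - 1) * β := by
      have := hb0; simp only [hh, sub_eq_zero] at this; exact this
    have hkey : lam + mu * (1 + (b - 1) * β) = 1 + (a - 1) * β := by
      rw [hlamdef, hmudef, div_mul_eq_mul_div, ← add_div, div_eq_iff hb1.ne']; ring
    rw [e1, e2] at hlt
    linarith
  refine ⟨⟨c, ⟨hc1, (hfix c hc1).mpr hc0⟩, ?_⟩, ?_⟩
  · rintro y ⟨hy1, hyfix⟩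
    exact huniq y c hy1 hc1 ((hfix y hy1).mp hyfix) hc0
  -- derivative bound
  intro rbar hr1 hfixr
  have heq : rbar ^ N = 1 + (rbar - 1) * β := by
    have := (hfix rbar hr1).mp hfixr
    simp only [hh, sub_eq_zero] at this; exact this
  set x := 1 + (rbar - 1) * β with hxdef
  have hx0 : 0 < x := by nlinarith
  have hr0 : (0:ℝ) < rbar := by linarith
  have hψfun : ψ = fun r => (1 + (r - 1) * β) ^ ((1:ℝ)/N) := funext hψ
  have hinner : HasDerivAt (fun r : ℝ => 1 + (r - 1) * β) β rbar := by
    simpa using ((((hasDerivAt_id rbar).sub_const 1).mul_const β).const_add 1)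
  have houter : HasDerivAt (fun y : ℝ => y ^ ((1:ℝ)/N)) (((1:ℝ)/N) * x ^ ((1:ℝ)/N - 1)) x :=
    Real.hasDerivAt_rpow_const (Or.inl hx0.ne')
  have hD : HasDerivAt ψ (((1:ℝ)/N) * x ^ ((1:ℝ)/N - 1) * β) rbar := by
    rw [hψfun]
    exact HasDerivAt.comp rbar houter hinner
  rw [hD.deriv]
  -- rewrite the rpow factor
  have hNne : (N:ℝ) ≠ 0 := by positivity
  have hxr : x ^ ((1:ℝ)/N - 1) = (rbar ^ (N - 1))⁻¹ := by
    have hx_eq : x = rbar ^ ((N:ℕ):ℝ) := by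
      rw [Real.rpow_natCast]; exact heq.symm
    rw [hx_eq, ← Real.rpow_natCast rbar (N-1), ← Real.rpow_neg hr0.le,
      ← Real.rpow_mul hr0.le]
    congr 1
    have : ((N - 1 : ℕ) : ℝ) = (N:ℝ) - 1 := by
      have : (1:ℕ) ≤ N := by omega
      push_cast [this]; ring
    rw [this]
    field_simp
    ring
  rw [hxr]
  -- β = geometric sum
  have hgeom : (∑ i ∈ Finset.range N, rbar ^ i) * (rbar - 1) = rbar ^ N - 1 :=
    geom_sum_mul rbar N
  have hβeq : β = ∑ i ∈ Finset.range N, rbar ^ i := by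
    have hr1' : (0:ℝ) < rbar - 1 := by linarith
    have h2 : (∑ i ∈ Finset.range N, rbar ^ i) * (rbar - 1) = β * (rbar - 1) := by
      rw [hgeom, heq]; ring
    exact (mul_right_cancel₀ hr1'.ne' h2).symm
  have hsum_lt : (∑ i ∈ Finset.range N, rbar ^ i) < (N:ℝ) * rbar ^ (N - 1) := by
    have hb : ∀ i ∈ Finset.range N, rbar ^ i ≤ rbar ^ (N - 1) := by
      intro i hi
      exact pow_le_pow_right₀ hr1.le (by have := Finset.mem_range.mp hi; omega)
    calc (∑ i ∈ Finset.range N, rbar ^ i)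
        < ∑ _i ∈ Finset.range N, rbar ^ (N - 1) := by
          refine Finset.sum_lt_sum hb ⟨0, Finset.mem_range.mpr (by omega), ?_⟩
          simpa using one_lt_pow₀ hr1 (by omega : N - 1 ≠ 0)
      _ = (N:ℝ) * rbar ^ (N - 1) := by
          rw [Finset.sum_const, Finset.card_range, nsmul_eq_mul]
  have hβlt : β < (N:ℝ) * rbar ^ (N - 1) := by rw [hβeq]; exact hsum_lt
  have hp : (0:ℝ) < rbar ^ (N - 1) := pow_pos hr0 _
  have hrw : ((1:ℝ)/N) * (rbar ^ (N - 1))⁻¹ * β = β / ((N:ℝ) * rbar ^ (N - 1)) := by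
    field_simp
  rw [hrw, div_lt_one (by positivity)]
  exact hβlt
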